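/- For every x ∈ (0, 1), G(x) = inf{ y ∈ [0, 1] : AT_o(x, y) ≤ AT_e(y, x) }, where G(x) = x for x ∈ [e^{−e}, 1) and, for x ∈ (0, e^{−e}), G(x) = exp(w · exp(−1/w)) with w the unique element of (−1, 0) satisfying w·e^w = 1/ln x. -/

import Mathlib

/-- Alternating towers: `AT 0 (x, y) = 1`, `AT n (x, y) = x ^ AT (n-1) (y, x)`. -/
noncomputable def altTower (x y : ℝ) : ℕ → ℝ
  | 0 => 1
  | n + 1 => x ^ altTower y x n

/-- `AT_e (x, y)`, the limit of the nonincreasing sequence `AT (2n) (x, y)`. -/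
noncomputable def ATe (x y : ℝ) : ℝ := ⨅ n : ℕ, altTower x y (2 * n)

/-- `AT_o (x, y)`, the limit of the nondecreasing sequence `AT (2n+1) (x, y)`. -/
noncomputable def ATo (x y : ℝ) : ℝ := ⨆ n : ℕ, altTower x y (2 * n + 1)

open Real Set Filter Topology

lemma altTower_succ (x y : ℝ) (n : ℕ) : altTower x y (n+1) = x ^ altTower y x n := rfl

lemma altTower_mem : ∀ (n : ℕ) (x y : ℝ), 0 ≤ x → x ≤ 1 → 0 ≤ y → y ≤ 1 →
    altTower x y n ∈ Set.Icc (0:ℝ) 1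
  | 0, x, y, _, _, _, _ => ⟨zero_le_one, le_refl 1⟩
  | n+1, x, y, hx0, hx1, hy0, hy1 => by
    have h := altTower_mem n y x hy0 hy1 hx0 hx1
    exact ⟨Real.rpow_nonneg hx0 _, Real.rpow_le_one hx0 hx1 h.1⟩

lemma altTower_step : ∀ (n : ℕ) (x y : ℝ), 0 < x → x ≤ 1 → 0 < y → y ≤ 1 →
    (Even n → altTower x y (n+2) ≤ altTower x y n) ∧
    (Odd n → altTower x y n ≤ altTower x y (n+2))
  | 0, x, y, hx0, hx1, hy0, hy1 => by
    constructor
    · intro _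
      have := altTower_mem 2 x y hx0.le hx1 hy0.le hy1
      simpa [altTower] using this.2
    · intro h; simp at h
  | n+1, x, y, hx0, hx1, hy0, hy1 => by
    have IH := altTower_step n y x hy0 hy1 hx0 hx1
    constructor
    · intro he
      have ho : Odd n := Nat.Even.sub_odd (Nat.le_add_left 1 n) (by simpa using he) odd_one
      have := IH.2 ho
      show altTower x y (n+2+1) ≤ altTower x y (n+1)
      rw [altTower_succ, altTower_succ]
      exact Real.rpow_le_rpow_of_exponent_ge hx0 hx1 this
    · intro ho
      have he : Even n := by
        have := Nat.even_add_one (n := n)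
        rcases Nat.even_or_odd n with h | h
        · exact h
        · exact absurd (by simpa [Nat.even_add_one, Nat.not_even_iff_odd] using h) (Nat.not_even_iff_odd.mpr ho)
      have := IH.1 he
      show altTower x y (n+1) ≤ altTower x y (n+2+1)
      rw [altTower_succ, altTower_succ]
      exact Real.rpow_le_rpow_of_exponent_ge hx0 hx1 this

lemma altTower_even_anti (x y : ℝ) (hx0 : 0 < x) (hx1 : x ≤ 1) (hy0 : 0 < y) (hy1 : y ≤ 1) :
    Antitone (fun n => altTower x y (2*n)) := by
  apply antitone_nat_of_succ_le
  intro n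
  have h := (altTower_step (2*n) x y hx0 hx1 hy0 hy1).1 (even_two_mul n)
  have e : 2*(n+1) = 2*n+2 := by ring
  simpa [e] using h

lemma bddAbove_odd (x y : ℝ) (hx0 : 0 ≤ x) (hx1 : x ≤ 1) (hy0 : 0 ≤ y) (hy1 : y ≤ 1) :
    BddAbove (Set.range fun n => altTower x y (2*n+1)) :=
  ⟨1, by rintro _ ⟨n, rfl⟩; exact (altTower_mem _ x y hx0 hx1 hy0 hy1).2⟩

lemma bddBelow_even (x y : ℝ) (hx0 : 0 ≤ x) (hx1 : x ≤ 1) (hy0 : 0 ≤ y) (hy1 : y ≤ 1) :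
    BddBelow (Set.range fun n => altTower x y (2*n)) :=
  ⟨0, by rintro _ ⟨n, rfl⟩; exact (altTower_mem _ x y hx0 hx1 hy0 hy1).1⟩

/-- membership criterion: if `c^(x^t) = t` and `x^t ≤ t` then `c ∈ S`. -/
lemma mem_S (x c t : ℝ) (hx0 : 0 < x) (hx1 : x ≤ 1) (hc0 : 0 < c) (hc1 : c ≤ 1)
    (ht1 : t ≤ 1)
    (hfix : c ^ (x ^ t) = t) (hle : x ^ t ≤ t) :
    ATo x c ≤ ATe c x := by
  have key : ∀ n, t ≤ altTower c x (2*n) := by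
    intro n
    induction n with
    | zero => simpa [altTower] using ht1
    | succ n ih =>
      have e : 2*(n+1) = (2*n+1)+1 := by ring
      rw [e, altTower_succ, altTower_succ]
      calc t = c ^ (x ^ t) := hfix.symm
        _ ≤ c ^ (x ^ altTower c x (2*n)) :=
          Real.rpow_le_rpow_of_exponent_ge hc0 hc1
            (Real.rpow_le_rpow_of_exponent_ge hx0 hx1 ih)
  have h1 : ATo x c ≤ x ^ t := by
    apply ciSup_le
    intro n
    rw [altTower_succ]
    exact Real.rpow_le_rpow_of_exponent_ge hx0 hx1 (key n)
  have h2 : t ≤ ATe c x := le_ciInf key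
  exact h1.trans (hle.trans h2)

lemma zero_not_mem (x : ℝ) (hx0 : 0 < x) (hx1 : x < 1) : ¬ (ATo x 0 ≤ ATe 0 x) := by
  intro h
  have h1 : ATe 0 x ≤ altTower 0 x (2*1) := ciInf_le (bddBelow_even 0 x le_rfl zero_le_one hx0.le hx1.le) 1
  have e1 : altTower 0 x 2 = 0 := by
    have : altTower x 0 1 = x := by rw [altTower_succ]; simp [altTower]
    rw [show (2:ℕ) = 1+1 from rfl, altTower_succ, this, Real.zero_rpow hx0.ne']
  have h2 : x ≤ ATo x 0 := by
    have := le_ciSup (bddAbove_odd x 0 hx0.le hx1.le le_rfl zero_le_one) 0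
    simpa [altTower_succ, altTower, ATo] using this
  have : (0:ℝ) < ATe 0 x := lt_of_lt_of_le hx0 (h2.trans h)
  rw [show 2*1 = 2 from rfl, e1] at h1
  linarith

lemma ATe_fixed (x y : ℝ) (hx0 : 0 < x) (hx1 : x ≤ 1) (hy0 : 0 < y) (hy1 : y ≤ 1) :
    ATe y x = y ^ (x ^ ATe y x) ∧ x ^ ATe y x ≤ ATo x y := by
  set E := ATe y x with hE
  have hanti := altTower_even_anti y x hy0 hy1 hx0 hx1
  have hbdd := bddBelow_even y x hy0.le hy1 hx0.le hx1
  have hlim : Tendsto (fun n => altTower y x (2*n)) atTop (𝓝 E) :=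
    tendsto_atTop_ciInf hanti hbdd
  have hcont : Continuous (fun t : ℝ => y ^ (x ^ t)) := by
    have : (fun t : ℝ => y ^ (x ^ t)) = fun t => Real.exp (Real.log y * Real.exp (Real.log x * t)) := by
      funext t
      rw [Real.rpow_def_of_pos hx0, Real.rpow_def_of_pos hy0]
    rw [this]
    exact Real.continuous_exp.comp ((continuous_const.mul (Real.continuous_exp.comp (continuous_const.mul continuous_id))))
  have hlim2 : Tendsto (fun n => altTower y x (2*(n+1))) atTop (𝓝 E) :=
    hlim.comp (tendsto_add_atTop_nat 1)
  have heq : (fun n => altTower y x (2*(n+1))) = fun n => y ^ (x ^ altTower y x (2*n)) := by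
    funext n
    have e : 2*(n+1) = (2*n+1)+1 := by ring
    rw [e, altTower_succ, altTower_succ]
  have hlim3 : Tendsto (fun n => y ^ (x ^ altTower y x (2*n))) atTop (𝓝 (y ^ (x ^ E))) :=
    (hcont.tendsto E).comp hlim
  rw [heq] at hlim2
  refine ⟨tendsto_nhds_unique hlim2 hlim3, ?_⟩
  have hcont2 : Continuous (fun t : ℝ => x ^ t) := by
    have : (fun t : ℝ => x ^ t) = fun t => Real.exp (Real.log x * t) := by
      funext t; rw [Real.rpow_def_of_pos hx0]
    rw [this]; exact Real.continuous_exp.comp (continuous_const.mul continuous_id)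
  have hlim4 : Tendsto (fun n => x ^ altTower y x (2*n)) atTop (𝓝 (x ^ E)) :=
    (hcont2.tendsto E).comp hlim
  apply le_of_tendsto hlim4
  filter_upwards with n
  have : altTower x y (2*n+1) ≤ ATo x y :=
    le_ciSup (bddAbove_odd x y hx0.le hx1 hy0.le hy1) n
  rwa [altTower_succ] at this

lemma ATe_bounds (x y : ℝ) (hx0 : 0 ≤ x) (hx1 : x ≤ 1) (hy0 : 0 ≤ y) (hy1 : y ≤ 1) :
    0 ≤ ATe y x ∧ ATe y x ≤ 1 := by
  constructor
  · exact le_ciInf fun n => (altTower_mem _ y x hy0 hy1 hx0 hx1).1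
  · have := ciInf_le (bddBelow_even y x hy0 hy1 hx0 hx1) 0
    simpa [altTower, ATe] using this


lemma log_le_div_e {s : ℝ} (hs : 0 < s) : Real.log s ≤ s / Real.exp 1 := by
  have h1 : Real.log (s / Real.exp 1) ≤ s / Real.exp 1 - 1 :=
    Real.log_le_sub_one_of_pos (div_pos hs (Real.exp_pos 1))
  rw [Real.log_div hs.ne' (Real.exp_ne_zero 1), Real.log_exp] at h1
  linarith

lemma neg_log_le {t : ℝ} (ht : 0 < t) : -Real.log t ≤ t⁻¹ / Real.exp 1 := by
  have := log_le_div_e (s := t⁻¹) (by positivity)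
  rwa [Real.log_inv] at this

/-- `t ↦ t * (-log t)` is monotone on `(0, e⁻¹]`. -/
lemma mul_neg_log_mono {a b : ℝ} (ha : 0 < a) (hab : a ≤ b) (hb : b ≤ Real.exp (-1)) :
    a * (-Real.log a) ≤ b * (-Real.log b) := by
  have hb0 : 0 < b := lt_of_lt_of_le ha hab
  set r := a / b with hr
  have hr0 : 0 < r := div_pos ha hb0
  have hr1 : r ≤ 1 := (div_le_one hb0).mpr hab
  have hlogb : Real.log b ≤ -1 := by
    have := Real.log_le_log hb0 hb
    rwa [Real.log_exp] at this
  have hloga : Real.log a = Real.log b + Real.log r := by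
    rw [hr, Real.log_div ha.ne' hb0.ne']; ring
  have key : r * (-Real.log r) ≤ 1 - r := by
    have h1 : Real.log r⁻¹ ≤ r⁻¹ - 1 := Real.log_le_sub_one_of_pos (by positivity)
    rw [Real.log_inv] at h1
    have := mul_le_mul_of_nonneg_left h1 hr0.le
    calc r * (-Real.log r) ≤ r * (r⁻¹ - 1) := this
      _ = 1 - r := by field_simp
  have ha' : a = r * b := by rw [hr]; field_simp
  rw [ha', Real.log_mul hr0.ne' hb0.ne']
  have expand : r * b * -(Real.log r + Real.log b) =
      r * (b * (-Real.log b)) + b * (r * (-Real.log r)) := by ring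
  rw [expand]
  have h2 : b * (r * (-Real.log r)) ≤ b * (1 - r) := by
    apply mul_le_mul_of_nonneg_left key hb0.le
  have h3 : b * (1 - r) ≤ (1 - r) * (b * (-Real.log b)) := by
    have hpos : 0 ≤ b * (1 - r) := mul_nonneg hb0.le (by linarith)
    have : (1:ℝ) ≤ -Real.log b := by linarith
    calc b * (1 - r) = (1-r) * (b * 1) := by ring
      _ ≤ (1-r) * (b * (-Real.log b)) := by
        apply mul_le_mul_of_nonneg_left _ (by linarith : (0:ℝ) ≤ 1 - r)
        exact mul_le_mul_of_nonneg_left this hb0.le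
  nlinarith [h2, h3]

/-- `t ↦ t * log t` is monotone on `[e⁻¹, 1]`. -/
lemma mul_log_mono {a b : ℝ} (ha : Real.exp (-1) ≤ a) (hab : a ≤ b) (hb : b ≤ 1) :
    a * Real.log a ≤ b * Real.log b := by
  have ha0 : 0 < a := lt_of_lt_of_le (Real.exp_pos _) ha
  have hb0 : 0 < b := lt_of_lt_of_le ha0 hab
  set s := b / a with hs
  have hs1 : 1 ≤ s := (one_le_div ha0).mpr hab
  have hs0 : 0 < s := lt_of_lt_of_le one_pos hs1
  have hloga : -Real.log a ≤ 1 := by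
    have := Real.log_le_log (Real.exp_pos _) ha
    rw [Real.log_exp] at this; linarith
  have hlogb : Real.log b = Real.log a + Real.log s := by
    rw [hs, Real.log_div hb0.ne' ha0.ne']; ring
  have key : s - 1 ≤ s * Real.log s := by
    have h1 : Real.log s⁻¹ ≤ s⁻¹ - 1 := Real.log_le_sub_one_of_pos (by positivity)
    rw [Real.log_inv] at h1
    have := mul_le_mul_of_nonneg_left h1 hs0.le
    have h2 : s * (-Real.log s) ≤ s * (s⁻¹ - 1) := this
    have h3 : s * (s⁻¹ - 1) = 1 - s := by field_simp
    nlinarith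
  have hb' : b = s * a := by rw [hs]; field_simp
  rw [hb', Real.log_mul hs0.ne' ha0.ne']
  have h4 : (s-1) * (-Real.log a) ≤ s * Real.log s := by
    calc (s-1) * (-Real.log a) ≤ (s-1) * 1 := by
          apply mul_le_mul_of_nonneg_left hloga (by linarith)
      _ = s - 1 := by ring
      _ ≤ s * Real.log s := key
  nlinarith [mul_le_mul_of_nonneg_left h4 ha0.le]


noncomputable def phiF (L : ℝ) : ℝ → ℝ := fun t => Real.log t * Real.exp (-(L * t))

lemma phiF_hasDeriv (L t : ℝ) (ht : 0 < t) :
    HasDerivAt (phiF L) (Real.exp (-(L*t)) * t⁻¹ * (1 - L * (t * Real.log t))) t := by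
  have h1 : HasDerivAt Real.log t⁻¹ t := Real.hasDerivAt_log ht.ne'
  have h2 : HasDerivAt (fun s : ℝ => Real.exp (-(L * s))) (Real.exp (-(L*t)) * (-(L*1))) t := by
    exact (((hasDerivAt_id t).const_mul L).neg).exp
  have h3 := h1.mul h2
  have hti : t⁻¹ * t = 1 := inv_mul_cancel₀ ht.ne'
  have e : Real.exp (-(L*t)) * t⁻¹ * (1 - L * (t * Real.log t)) =
      t⁻¹ * Real.exp (-(L*t)) + Real.log t * (Real.exp (-(L*t)) * (-(L*1))) := by
    linear_combination (-(Real.exp (-(L*t))) * L * Real.log t) * hti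
  rw [e]
  exact h3

lemma phiF_contOn (L : ℝ) {s : Set ℝ} (hs : ∀ t ∈ s, t ≠ 0) : ContinuousOn (phiF L) s := by
  apply ContinuousOn.mul
  · exact Real.continuousOn_log.mono (by intro t ht; simpa using hs t ht)
  · exact (Real.continuous_exp.comp (continuous_const.mul continuous_id).neg).continuousOn

lemma phiF_mono (L a b : ℝ) (ha : 0 < a)
    (hc : ∀ t ∈ Ioo a b, L * (t * Real.log t) ≤ 1) :
    MonotoneOn (phiF L) (Icc a b) := by
  apply monotoneOn_of_deriv_nonneg (convex_Icc a b)
  · exact phiF_contOn L (fun t ht => (lt_of_lt_of_le ha ht.1).ne')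
  · intro t ht
    rw [interior_Icc] at ht
    exact ((phiF_hasDeriv L t (ha.trans ht.1)).differentiableAt).differentiableWithinAt
  · intro t ht
    rw [interior_Icc] at ht
    have h0 : 0 < t := ha.trans ht.1
    rw [(phiF_hasDeriv L t h0).deriv]
    have := hc t ht
    have h1 : (0:ℝ) ≤ 1 - L * (t * Real.log t) := by linarith
    positivity

lemma phiF_anti (L a b : ℝ) (ha : 0 < a)
    (hc : ∀ t ∈ Ioo a b, 1 ≤ L * (t * Real.log t)) :
    AntitoneOn (phiF L) (Icc a b) := by
  apply antitoneOn_of_deriv_nonpos (convex_Icc a b)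
  · exact phiF_contOn L (fun t ht => (lt_of_lt_of_le ha ht.1).ne')
  · intro t ht
    rw [interior_Icc] at ht
    exact ((phiF_hasDeriv L t (ha.trans ht.1)).differentiableAt).differentiableWithinAt
  · intro t ht
    rw [interior_Icc] at ht
    have h0 : 0 < t := ha.trans ht.1
    rw [(phiF_hasDeriv L t h0).deriv]
    have := hc t ht
    have h1 : 1 - L * (t * Real.log t) ≤ 0 := by linarith
    have h2 : (0:ℝ) < Real.exp (-(L*t)) * t⁻¹ := by positivity
    nlinarith

/-- Existence of `t₀` with `log t₀ = L t₀` (i.e. `x^t₀ = t₀`). -/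
lemma t0_exists (x : ℝ) (hx0 : 0 < x) (hx1 : x < 1) :
    ∃ t0, 0 < t0 ∧ t0 ≤ 1 ∧ Real.log t0 = Real.log x * t0 := by
  set L := Real.log x with hL
  have hL0 : L < 0 := Real.log_neg hx0 hx1
  set g : ℝ → ℝ := fun t => Real.log t - L * t with hg
  have hcont : ContinuousOn g (Icc x 1) := by
    apply ContinuousOn.sub
    · exact Real.continuousOn_log.mono (by intro t ht; simp; exact (lt_of_lt_of_le hx0 ht.1).ne')
    · exact (continuous_const.mul continuous_id).continuousOn
  have hgx : g x ≤ 0 := by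
    simp only [hg, ← hL]
    nlinarith [hx1]
  have hg1 : 0 ≤ g 1 := by simp [hg]; linarith
  have := intermediate_value_Icc hx1.le hcont
  have h0 : (0:ℝ) ∈ Icc (g x) (g 1) := ⟨hgx, hg1⟩
  obtain ⟨t0, ht0, hgt0⟩ := this h0
  exact ⟨t0, lt_of_lt_of_le hx0 ht0.1, ht0.2, by have := hgt0; simp only [hg] at this; linarith⟩

/-- admissible `s` (with `x^s ≤ s`) satisfies `t0 ≤ s`. -/
lemma t0_le_admissible (x t0 s : ℝ) (hx0 : 0 < x) (hx1 : x < 1) (ht00 : 0 < t0)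
    (ht0fix : Real.log t0 = Real.log x * t0) (hs0 : 0 < s) (hxs : x ^ s ≤ s) :
    t0 ≤ s := by
  set L := Real.log x
  have hLs : L * s ≤ Real.log s := by
    have h1 : Real.log (x ^ s) ≤ Real.log s := Real.log_le_log (Real.rpow_pos_of_pos hx0 s) hxs
    rwa [Real.log_rpow hx0, mul_comm] at h1
  by_contra h
  push_neg at h
  have h1 : Real.log s < Real.log t0 := Real.log_lt_log hs0 h
  have h2 : L * t0 - L * s = Real.log t0 - L * s := by rw [ht0fix]
  have hL0 : L < 0 := Real.log_neg hx0 hx1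
  nlinarith [h1, hLs, h2]

lemma sInf_eq_main (x : ℝ) (hx0 : 0 < x) (hx1 : x < 1) (t : ℝ) (ht0 : 0 < t) (ht1 : t ≤ 1)
    (hxt : x ^ t ≤ t)
    (hmin : ∀ s, 0 < s → s ≤ 1 → x ^ s ≤ s → phiF (Real.log x) t ≤ phiF (Real.log x) s) :
    sInf {y ∈ Set.Icc (0:ℝ) 1 | ATo x y ≤ ATe y x} = Real.exp (phiF (Real.log x) t) := by
  set L := Real.log x with hL
  set c := Real.exp (phiF L t) with hc
  have hc0 : 0 < c := Real.exp_pos _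
  have hphineg : phiF L t ≤ 0 := by
    have h1 : Real.log t ≤ 0 := Real.log_nonpos ht0.le ht1
    have h2 : (0:ℝ) ≤ Real.exp (-(L*t)) := (Real.exp_pos _).le
    exact mul_nonpos_of_nonpos_of_nonneg h1 h2
  have hc1 : c ≤ 1 := Real.exp_le_one_iff.mpr hphineg
  have hxtpos : (0:ℝ) < x ^ t := Real.rpow_pos_of_pos hx0 t
  have hxteq : x ^ t = Real.exp (L * t) := Real.rpow_def_of_pos hx0 t
  have hfix : c ^ (x ^ t) = t := by
    rw [Real.rpow_def_of_pos hc0, hc, Real.log_exp, hxteq]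
    have : phiF L t * Real.exp (L*t) = Real.log t := by
      simp only [phiF]
      rw [Real.exp_neg]
      field_simp
    rw [this, Real.exp_log ht0]
  have hcmem : c ∈ {y ∈ Set.Icc (0:ℝ) 1 | ATo x y ≤ ATe y x} :=
    ⟨⟨hc0.le, hc1⟩, mem_S x c t hx0 hx1.le hc0 hc1 ht1 hfix hxt⟩
  apply IsLeast.csInf_eq
  refine ⟨hcmem, ?_⟩
  rintro y ⟨⟨hy0, hy1⟩, hmem⟩
  rcases eq_or_lt_of_le hy0 with h | hy0'
  · exact absurd hmem (by rw [← h]; exact zero_not_mem x hx0 hx1)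
  obtain ⟨hEfix, hEle⟩ := ATe_fixed x y hx0 hx1.le hy0' hy1
  set E := ATe y x with hE
  have hE1 : E ≤ 1 := (ATe_bounds x y hx0.le hx1.le hy0 hy1).2
  have hxE : x ^ E ≤ E := hEle.trans hmem
  have hE0 : (0:ℝ) < E := lt_of_lt_of_le (Real.rpow_pos_of_pos hx0 E) hxE
  have hlogy : Real.log y = phiF L E := by
    have h1 : Real.log E = (x ^ E) * Real.log y := by
      conv_lhs => rw [hEfix]
      exact Real.log_rpow hy0' _
    have hxEeq : x ^ E = Real.exp (L * E) := Real.rpow_def_of_pos hx0 E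
    rw [hxEeq] at h1
    simp only [phiF]
    rw [Real.exp_neg]
    field_simp
    linarith [h1]
  have := hmin E hE0 hE1 hxE
  rw [← hlogy] at this
  calc c = Real.exp (phiF L t) := hc
    _ ≤ Real.exp (Real.log y) := Real.exp_le_exp.mpr this
    _ = y := Real.exp_log hy0'

theorem stmt_11 (x : ℝ) (hx : x ∈ Set.Ioo (0 : ℝ) 1) :
    (Real.exp (-Real.exp 1) ≤ x →
      x = sInf {y ∈ Set.Icc (0 : ℝ) 1 | ATo x y ≤ ATe y x}) ∧
    (x < Real.exp (-Real.exp 1) →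
      ∀ w ∈ Set.Ioo (-1 : ℝ) 0, w * Real.exp w = 1 / Real.log x →
        Real.exp (w * Real.exp (-1 / w)) =
          sInf {y ∈ Set.Icc (0 : ℝ) 1 | ATo x y ≤ ATe y x}) := by
  obtain ⟨hx0, hx1⟩ := hx
  set L := Real.log x with hLdef
  have hL0 : L < 0 := Real.log_neg hx0 hx1
  obtain ⟨t0, ht00, ht01, ht0fix⟩ := t0_exists x hx0 hx1
  have ht0x : x ^ t0 = t0 := by
    rw [Real.rpow_def_of_pos hx0, ← hLdef, ← ht0fix, Real.exp_log ht00]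
  constructor
  · -- case e^{-e} ≤ x
    intro hxe
    have hLe : -Real.exp 1 ≤ L := by
      have := Real.log_le_log (Real.exp_pos _) hxe
      rwa [Real.log_exp] at this
    have hmonoC : ∀ u ∈ Set.Ioo t0 (1:ℝ), L * (u * Real.log u) ≤ 1 := by
      intro u hu
      have hu0 : 0 < u := ht00.trans hu.1
      have h1 : -Real.log u ≤ u⁻¹ / Real.exp 1 := neg_log_le hu0
      have h2 : u * (-Real.log u) ≤ u * (u⁻¹ / Real.exp 1) :=
        mul_le_mul_of_nonneg_left h1 hu0.le
      have h3 : u * (u⁻¹ / Real.exp 1) = (Real.exp 1)⁻¹ := by field_simp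
      have h4 : 0 ≤ u * (-Real.log u) := by
        have : Real.log u ≤ 0 := Real.log_nonpos hu0.le hu.2.le
        nlinarith
      have h5 : -L ≤ Real.exp 1 := by linarith
      have h6 : (-L) * (u * (-Real.log u)) ≤ Real.exp 1 * (Real.exp 1)⁻¹ := by
        apply mul_le_mul h5 (by linarith) h4 (Real.exp_pos 1).le
      have h7 : Real.exp 1 * (Real.exp 1)⁻¹ = 1 := by
        field_simp
      nlinarith [h6]
    have hmono := phiF_mono L t0 1 ht00 hmonoC
    have hmin : ∀ s, 0 < s → s ≤ 1 → x ^ s ≤ s → phiF L t0 ≤ phiF L s := by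
      intro s hs0 hs1 hxs
      have hts : t0 ≤ s := t0_le_admissible x t0 s hx0 hx1 ht00 ht0fix hs0 hxs
      exact hmono ⟨le_rfl, ht01⟩ ⟨hts, hs1⟩ hts
    have := sInf_eq_main x hx0 hx1 t0 ht00 ht01 (le_of_eq ht0x) hmin
    rw [this]
    have hphit0 : phiF L t0 = L := by
      simp only [phiF]
      rw [ht0fix, ← ht0fix, Real.exp_neg, Real.exp_log ht00, ht0fix]
      field_simp
      exact hLdef.symm
    rw [hphit0]
    exact (Real.exp_log hx0).symm
  · -- case x < e^{-e}
    intro hxe w hw hweq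
    obtain ⟨hwm1, hw0⟩ := hw
    have hLe : L < -Real.exp 1 := by
      have := Real.log_lt_log hx0 hxe
      rwa [Real.log_exp] at this
    have hwne : w ≠ 0 := hw0.ne
    have hLne : L ≠ 0 := hL0.ne
    have hw' : L * Real.exp w = 1 / w := by
      have h1 : L * (w * Real.exp w) = 1 := by rw [hweq]; field_simp
      field_simp at h1 ⊢
      nlinarith [h1]
    set t2 := Real.exp w with ht2def
    have ht20 : 0 < t2 := Real.exp_pos w
    have ht21 : t2 ≤ 1 := Real.exp_le_one_iff.mpr hw0.le
    have hxt2 : x ^ t2 ≤ t2 := by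
      rw [Real.rpow_def_of_pos hx0, ← hLdef, hw']
      apply Real.exp_le_exp.mpr
      rw [div_le_iff_of_neg hw0]
      nlinarith
    -- t0 facts
    have hfix' : Real.log t0 = L * t0 := by rw [hLdef]; exact ht0fix
    have hnegL : (0:ℝ) < -L := by linarith
    have ht0inv : 1 ≤ (-L) * t0 := by
      by_contra h
      push_neg at h
      have hta : t0 < 1/(-L) := by
        rw [lt_div_iff₀ hnegL]; nlinarith
      have hl : Real.log t0 < Real.log (1/(-L)) := Real.log_lt_log ht00 hta
      have h2 : Real.log (1/(-L)) = -Real.log (-L) := by rw [one_div, Real.log_inv]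
      have h1 : 1 < Real.log (-L) := by
        have := Real.log_lt_log (Real.exp_pos 1) (by linarith : Real.exp 1 < -L)
        rwa [Real.log_exp] at this
      rw [h2] at hl
      -- L*t0 = log t0 < -log(-L) < -1, but -L*t0 < 1 gives L*t0 > -1
      nlinarith [hl, h1, hfix', h]
    have ht0e : t0 ≤ Real.exp (-1) := by
      by_contra h
      push_neg at h
      have hee : Real.exp 1 * Real.exp (-1) = 1 := by
        rw [← Real.exp_add]; norm_num
      have hgt1 : 1 < (-L) * Real.exp (-1) := by
        have := mul_lt_mul_of_pos_right (show Real.exp 1 < -L by linarith) (Real.exp_pos (-1))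
        linarith
      have hm : (-L) * Real.exp (-1) < (-L) * t0 := by
        exact mul_lt_mul_of_pos_left h hnegL
      have hl : (-1:ℝ) < Real.log t0 := by
        have := Real.log_lt_log (Real.exp_pos (-1)) h
        rwa [Real.log_exp] at this
      rw [hfix'] at hl
      nlinarith [hgt1, hm, hl]
    have ht0t2 : t0 ≤ t2 := ht0e.trans (Real.exp_le_exp.mpr (by linarith))
    have ht2e : Real.exp (-1) ≤ t2 := Real.exp_le_exp.mpr (by linarith)
    have ht2log : t2 * Real.log t2 = 1/L := by
      rw [ht2def, Real.log_exp, mul_comm]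
      exact hweq ▸ (by rw [hweq])
    -- antitone on [t0, t2]
    have hanti := phiF_anti L t0 t2 ht00 (by
      intro u hu
      have hu0 : 0 < u := ht00.trans hu.1
      rcases le_or_gt u (Real.exp (-1)) with hue | hue
      · have hM1 : t0 * (-Real.log t0) ≤ u * (-Real.log u) :=
          mul_neg_log_mono ht00 hu.1.le hue
        have h2 : t0 * (-Real.log t0) = ((-L)*t0) * t0 := by
          rw [ht0fix]; ring
        have h1 : (-L) * (t0 * (-Real.log t0)) ≤ (-L) * (u * (-Real.log u)) :=
          mul_le_mul_of_nonneg_left hM1 (by linarith)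
        have h3 : (-L) * (((-L)*t0) * t0) = ((-L)*t0)^2 := by ring
        have h4 : 1 ≤ ((-L)*t0)^2 := by nlinarith [ht0inv]
        have h5 : (-L) * (u * (-Real.log u)) = L * (u * Real.log u) := by ring
        rw [h2, h3] at h1
        linarith
      · have hM2 : u * Real.log u ≤ t2 * Real.log t2 :=
          mul_log_mono hue.le hu.2.le ht21
        have h1 : L * (t2 * Real.log t2) ≤ L * (u * Real.log u) :=
          mul_le_mul_of_nonpos_left hM2 hL0.le
        rw [ht2log] at h1
        have h2 : L * (1/L) = 1 := by field_simp
        linarith)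
    -- monotone on [t2, 1]
    have hmono := phiF_mono L t2 1 ht20 (by
      intro u hu
      have hM2 : t2 * Real.log t2 ≤ u * Real.log u :=
        mul_log_mono ht2e hu.1.le hu.2.le
      have h1 : L * (u * Real.log u) ≤ L * (t2 * Real.log t2) :=
        mul_le_mul_of_nonpos_left hM2 hL0.le
      rw [ht2log] at h1
      have h2 : L * (1/L) = 1 := by field_simp
      linarith)
    have hmin : ∀ s, 0 < s → s ≤ 1 → x ^ s ≤ s → phiF L t2 ≤ phiF L s := by
      intro s hs0 hs1 hxs
      have hts : t0 ≤ s := t0_le_admissible x t0 s hx0 hx1 ht00 ht0fix hs0 hxs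
      rcases le_or_gt s t2 with h | h
      · exact hanti ⟨hts, h⟩ ⟨ht0t2, le_rfl⟩ h
      · exact hmono ⟨le_rfl, ht21⟩ ⟨h.le, hs1⟩ h.le
    have := sInf_eq_main x hx0 hx1 t2 ht20 ht21 hxt2 hmin
    rw [this]
    have hphit2 : phiF L t2 = w * Real.exp (-1/w) := by
      simp only [phiF]
      rw [ht2def, Real.log_exp, hw']
      congr 1
      rw [neg_div]
    rw [hphit2]
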